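/- (Combinatorial interpolation, full version.) For all positive integers e, n, N there exists a positive integer d with the following property: for every finite set X and every coloring t of the nonempty subsets of X of size at most n−1 by N colors, there exists a subset T ⊆ X with |T| ≤ d such that for every color a and every 1 ≤ s ≤ n−1: #{S ⊆ X : |S| = s and t(S) = a} ≡ #{S ⊆ T : |S| = s and t(S) = a} (mod e). -/

import Mathlib

open Finset

theorem interp_ramsey (k : ℕ) : ∀ (c m : ℕ), ∃ R : ℕ,
    ∀ {α : Type} [DecidableEq α] [LinearOrder α] (X : Finset α) (f : Finset α → Fin c),
      R ≤ X.card → ∃ H, H ⊆ X ∧ m ≤ H.card ∧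
        ∀ D₁, D₁ ⊆ H → D₁.card = k → ∀ D₂, D₂ ⊆ H → D₂.card = k → f D₁ = f D₂ := by
  induction k with
  | zero =>
    intro c m
    refine ⟨m, fun X f h => ⟨X, Subset.rfl, h, ?_⟩⟩
    intro D₁ h₁ hc₁ D₂ h₂ hc₂
    rw [card_eq_zero] at hc₁ hc₂
    rw [hc₁, hc₂]
  | succ k IH =>
    intro c m
    -- inner construction: a sequence `A` with end-homogeneity witnesses
    have inner : ∀ q : ℕ, ∃ R : ℕ,
        ∀ {α : Type} [DecidableEq α] [LinearOrder α] (X : Finset α) (f : Finset α → Fin c),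
          R ≤ X.card → ∃ A Y : Finset α, A ⊆ X ∧ Y ⊆ X ∧ A.card = q ∧ k ≤ Y.card ∧
            (∀ a ∈ A, ∀ y ∈ Y, a < y) ∧
            (∀ a ∈ A, ∀ D₁, D₁ ⊆ A ∪ Y → (∀ x ∈ D₁, a < x) → D₁.card = k →
              ∀ D₂, D₂ ⊆ A ∪ Y → (∀ x ∈ D₂, a < x) → D₂.card = k →
                f (insert a D₁) = f (insert a D₂)) := by
      intro q
      induction q with
      | zero =>
        exact ⟨k, fun X f h =>
          ⟨∅, X, empty_subset _, Subset.rfl, card_empty, h, by simp, by simp⟩⟩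
      | succ q IHq =>
        obtain ⟨Rq, hRq⟩ := IHq
        obtain ⟨Rr, hRr⟩ := IH c Rq
        refine ⟨Rr + 1, ?_⟩
        intro α _ _ X f hX
        have hXne : X.Nonempty := card_pos.mp (by omega)
        set a := X.min' hXne with ha
        have haX : a ∈ X := X.min'_mem hXne
        have hcard : Rr ≤ (X.erase a).card := by
          rw [card_erase_of_mem haX]; omega
        obtain ⟨Y₁, hY₁sub, hY₁card, hY₁hom⟩ := hRr (X.erase a) (fun D => f (insert a D)) hcard
        obtain ⟨A, Y, hAsub, hYsub, hAcard, hYcard, hAY, hinv⟩ := hRq Y₁ f hY₁card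
        have hAY₁ : A ⊆ Y₁ := hAsub
        have hYY₁ : Y ⊆ Y₁ := hYsub
        have haA : a ∉ A := fun h => (mem_erase.mp (hY₁sub (hAY₁ h))).1 rfl
        have hlt : ∀ x ∈ Y₁, a < x := by
          intro x hx
          have hxX := hY₁sub hx
          exact lt_of_le_of_ne (X.min'_le x (mem_of_mem_erase hxX))
            (Ne.symm (mem_erase.mp hxX).1)
        have hsubX : Y₁ ⊆ X := hY₁sub.trans (erase_subset _ _)
        refine ⟨insert a A, Y, insert_subset haX (hAY₁.trans hsubX), hYY₁.trans hsubX, ?_,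
          hYcard, ?_, ?_⟩
        · rw [card_insert_of_notMem haA, hAcard]
        · intro b hb y hy
          rcases mem_insert.mp hb with rfl | hb
          · exact hlt y (hYY₁ hy)
          · exact hAY b hb y hy
        · intro b hb D₁ hD₁ hD₁lt hD₁c D₂ hD₂ hD₂lt hD₂c
          rcases mem_insert.mp hb with heq | hb
          · have hsub : ∀ D : Finset α, D ⊆ insert a A ∪ Y → (∀ x ∈ D, a < x) → D ⊆ Y₁ := by
              intro D hD hDlt x hx
              rcases mem_union.mp (hD hx) with hxa | hxy
              · rcases mem_insert.mp hxa with heq2 | hxA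
                · exact absurd (hDlt x hx) (by rw [heq2]; simp)
                · exact hAY₁ hxA
              · exact hYY₁ hxy
            rw [heq] at hD₁lt hD₂lt ⊢
            exact hY₁hom D₁ (hsub D₁ hD₁ hD₁lt) hD₁c D₂ (hsub D₂ hD₂ hD₂lt) hD₂c
          · have hab : a < b := hlt b (hAY₁ hb)
            have hsub : ∀ D : Finset α, D ⊆ insert a A ∪ Y → (∀ x ∈ D, b < x) → D ⊆ A ∪ Y := by
              intro D hD hDlt x hx
              rcases mem_union.mp (hD hx) with hxa | hxy
              · rcases mem_insert.mp hxa with heq2 | hxA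
                · exact absurd (hDlt x hx) (by rw [heq2]; exact not_lt.mpr hab.le)
                · exact mem_union_left _ hxA
              · exact mem_union_right _ hxy
            exact hinv b hb D₁ (hsub D₁ hD₁ hD₁lt) hD₁lt hD₁c
              D₂ (hsub D₂ hD₂ hD₂lt) hD₂lt hD₂c
    obtain ⟨Rq, hRq⟩ := inner (c * m)
    refine ⟨Rq, ?_⟩
    intro α _ _ X f hX
    obtain ⟨A, Y, hAsub, hYsub, hAcard, hYcard, hAY, hinv⟩ := hRq X f hX
    obtain ⟨D₀, hD₀sub, hD₀card⟩ := Y.exists_subset_card_eq hYcard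
    haveI hcne : Nonempty (Fin c) := ⟨f ∅⟩
    set tag : α → Fin c := fun x => f (insert x D₀) with htag
    have hpig : ∃ b ∈ (univ : Finset (Fin c)), m ≤ (A.filter fun x => tag x = b).card := by
      apply exists_le_card_fiber_of_mul_le_card_of_maps_to (fun x _ => mem_univ _) univ_nonempty
      rw [card_univ, Fintype.card_fin, hAcard]
    obtain ⟨c₀, _, hfib⟩ := hpig
    set H := A.filter fun x => tag x = c₀ with hH
    have hHA : H ⊆ A := filter_subset _ _
    have key : ∀ D, D ⊆ H → D.card = k + 1 → f D = c₀ := by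
      intro D hD hDc
      have hDne : D.Nonempty := card_pos.mp (by omega)
      set b := D.min' hDne with hb
      have hbD : b ∈ D := D.min'_mem hDne
      have hbA : b ∈ A := hHA (hD hbD)
      have herase : insert b (D.erase b) = D := insert_erase hbD
      have h1 : D.erase b ⊆ A ∪ Y := fun x hx =>
        mem_union_left _ (hHA (hD (erase_subset _ _ hx)))
      have h2 : ∀ x ∈ D.erase b, b < x := fun x hx =>
        lt_of_le_of_ne (D.min'_le x (erase_subset _ _ hx)) (Ne.symm (mem_erase.mp hx).1)
      have h3 : D₀ ⊆ A ∪ Y := fun x hx => mem_union_right _ (hD₀sub hx)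
      have h4 : ∀ x ∈ D₀, b < x := fun x hx => hAY b hbA x (hD₀sub hx)
      have h5 : (D.erase b).card = k := by rw [card_erase_of_mem hbD, hDc]; omega
      have hmain := hinv b hbA (D.erase b) h1 h2 h5 D₀ h3 h4 hD₀card
      rw [herase] at hmain
      have htagb : tag b = c₀ := (mem_filter.mp (hD hbD)).2
      rw [hmain]
      exact htagb
    exact ⟨H, hHA.trans hAsub, hfib, fun D₁ h₁ hc₁ D₂ h₂ hc₂ => by
      rw [key D₁ h₁ hc₁, key D₂ h₂ hc₂]⟩

/-- Simultaneous homogeneity for all uniformities `j ≤ K`. -/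
theorem interp_ramsey_all (K : ℕ) : ∀ (c m : ℕ), ∃ R : ℕ,
    ∀ {α : Type} [DecidableEq α] [LinearOrder α] (X : Finset α) (f : Finset α → Fin c),
      R ≤ X.card → ∃ H, H ⊆ X ∧ m ≤ H.card ∧
        ∀ j, j ≤ K → ∀ D₁, D₁ ⊆ H → D₁.card = j → ∀ D₂, D₂ ⊆ H → D₂.card = j → f D₁ = f D₂ := by
  induction K with
  | zero =>
    intro c m
    refine ⟨m, fun X f h => ⟨X, Subset.rfl, h, ?_⟩⟩
    intro j hj D₁ h₁ hc₁ D₂ h₂ hc₂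
    interval_cases j
    rw [card_eq_zero] at hc₁ hc₂
    rw [hc₁, hc₂]
  | succ K IH =>
    intro c m
    obtain ⟨R₁, h₁⟩ := IH c m
    obtain ⟨R₂, h₂⟩ := interp_ramsey (K + 1) c R₁
    refine ⟨R₂, ?_⟩
    intro α _ _ X f hX
    obtain ⟨H₁, hH₁X, hH₁card, hhom₁⟩ := h₂ X f hX
    obtain ⟨H, hHsub, hHcard, hhom⟩ := h₁ H₁ f hH₁card
    refine ⟨H, hHsub.trans hH₁X, hHcard, ?_⟩
    intro j hj D₁ hD₁ hc₁ D₂ hD₂ hc₂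
    rcases Nat.lt_succ_iff_lt_or_eq.mp (Nat.lt_succ_of_le hj) with hlt | rfl
    · exact hhom j (Nat.lt_succ_iff.mp hlt) D₁ hD₁ hc₁ D₂ hD₂ hc₂
    · exact hhom₁ D₁ (hD₁.trans hHsub) hc₁ D₂ (hD₂.trans hHsub) hc₂


theorem interp_alt_sum {α : Type} [DecidableEq α] (X H : Finset α) (hHX : H ⊆ X)
    (Pred : Finset α → Prop) [DecidablePred Pred]
    (hsz : ∀ S, Pred S → S.card < H.card) :
    ∑ D ∈ H.powerset, (-1 : ℤ) ^ D.card * ((X \ D).powerset.filter Pred).card = 0 := by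
  have step1 : ∀ D, ((X \ D).powerset.filter Pred)
      = (X.powerset.filter fun S => Disjoint S D ∧ Pred S) := by
    intro D
    ext S
    simp only [mem_filter, mem_powerset, subset_sdiff]
    tauto
  calc ∑ D ∈ H.powerset, (-1 : ℤ) ^ D.card * ((X \ D).powerset.filter Pred).card
      = ∑ D ∈ H.powerset, ∑ S ∈ X.powerset,
          (-1 : ℤ) ^ D.card * (if Disjoint S D ∧ Pred S then 1 else 0) := by
        refine sum_congr rfl fun D _ => ?_
        rw [step1 D, ← mul_sum]
        congr 1
        rw [card_filter]
        push_cast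
        rfl
    _ = ∑ S ∈ X.powerset, ∑ D ∈ H.powerset,
          (-1 : ℤ) ^ D.card * (if Disjoint S D ∧ Pred S then 1 else 0) := sum_comm
    _ = 0 := by
        refine sum_eq_zero fun S hS => ?_
        by_cases hP : Pred S
        · have h1 : ∀ D ∈ H.powerset,
              (-1 : ℤ) ^ D.card * (if Disjoint S D ∧ Pred S then 1 else 0)
              = if Disjoint S D then (-1 : ℤ) ^ D.card else 0 := by
            intro D _
            by_cases hd : Disjoint S D <;> simp [hd, hP]
          rw [sum_congr rfl h1, ← sum_filter]
          have h2 : H.powerset.filter (fun D => Disjoint S D) = (H \ S).powerset := by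
            ext D
            simp only [mem_filter, mem_powerset, subset_sdiff]
            rw [disjoint_comm]
          rw [h2]
          refine sum_powerset_neg_one_pow_card_of_nonempty ?_
          rw [← card_pos]
          have := le_card_sdiff S H
          have := hsz S hP
          omega
        · refine sum_eq_zero fun D _ => ?_
          simp [hP]


theorem interp_scalar_inv (k j : ℕ) (hj : j ≤ k) :
    ∑ i ∈ range (k + 1), (k.choose i : ℤ) * ((-1) ^ (i - j) * (i.choose j))
      = if j = k then 1 else 0 := by
  have h1 : ∑ i ∈ range (k + 1), (k.choose i : ℤ) * ((-1) ^ (i - j) * (i.choose j))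
      = ∑ i ∈ Ico j (k + 1), (k.choose i : ℤ) * ((-1) ^ (i - j) * (i.choose j)) := by
    refine (sum_subset ?_ ?_).symm
    · rw [range_eq_Ico]
      exact Ico_subset_Ico (Nat.zero_le j) le_rfl
    · intro i hi hni
      have : i < j := by
        simp only [mem_range] at hi
        simp only [mem_Ico] at hni
        omega
      rw [Nat.choose_eq_zero_of_lt this]
      push_cast
      ring
  rw [h1, sum_Ico_eq_sum_range]
  have h2 : ∀ l ∈ range (k + 1 - j), (k.choose (j + l) : ℤ) * ((-1) ^ (j + l - j) * ((j + l).choose j))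
      = (k.choose j : ℤ) * ((-1) ^ l * ((k - j).choose l)) := by
    intro l hl
    have hl' : l < k + 1 - j := mem_range.mp hl
    have hjl : j + l ≤ k := by omega
    have hch := Nat.choose_mul (n := k) (Nat.le_add_right j l)
    have hcast : (k.choose (j + l) : ℤ) * ((j + l).choose j)
        = (k.choose j : ℤ) * ((k - j).choose ((j + l) - j)) := by exact_mod_cast congrArg Nat.cast hch
    have hsub : j + l - j = l := by omega
    rw [hsub] at hcast ⊢
    calc (k.choose (j + l) : ℤ) * ((-1) ^ l * ((j + l).choose j))
        = ((k.choose (j + l) : ℤ) * ((j + l).choose j)) * (-1) ^ l := by ring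
      _ = ((k.choose j : ℤ) * ((k - j).choose l)) * (-1) ^ l := by rw [hcast]
      _ = (k.choose j : ℤ) * ((-1) ^ l * ((k - j).choose l)) := by ring
  rw [sum_congr rfl h2, ← mul_sum]
  have h3 : k + 1 - j = (k - j) + 1 := by omega
  rw [h3, Int.alternating_sum_range_choose]
  by_cases hjk : j = k
  · subst hjk; simp
  · have : ¬ (k - j = 0) := by omega
    rw [if_neg this, if_neg hjk, mul_zero]

theorem interp_binom_inv {G : Type} [AddCommGroup G] (c : ℕ → G) (k : ℕ) :
    ∑ i ∈ range (k + 1), (k.choose i : ℤ) •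
      (∑ j ∈ range (i + 1), ((-1 : ℤ) ^ (i - j) * (i.choose j)) • c j) = c k := by
  have hext : ∀ i ∈ range (k + 1),
      (k.choose i : ℤ) • (∑ j ∈ range (i + 1), ((-1 : ℤ) ^ (i - j) * (i.choose j)) • c j)
      = ∑ j ∈ range (k + 1), ((k.choose i : ℤ) * ((-1) ^ (i - j) * (i.choose j))) • c j := by
    intro i hi
    have hik : i + 1 ≤ k + 1 := by simpa [Nat.succ_le_succ_iff, Nat.lt_succ_iff] using mem_range.mp hi
    rw [smul_sum]
    simp_rw [smul_smul]
    refine sum_subset (by exact range_subset_range.mpr hik) ?_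
    intro j hj hnj
    have : i < j := by
      simp only [mem_range] at hj hnj
      omega
    rw [Nat.choose_eq_zero_of_lt this]
    push_cast
    rw [mul_zero, mul_zero, zero_smul]
  rw [sum_congr rfl hext, sum_comm]
  have hcol : ∀ j ∈ range (k + 1),
      ∑ i ∈ range (k + 1), ((k.choose i : ℤ) * ((-1) ^ (i - j) * (i.choose j))) • c j
      = (if j = k then (1 : ℤ) else 0) • c j := by
    intro j hj
    rw [← sum_smul, interp_scalar_inv k j (Nat.lt_succ_iff.mp (mem_range.mp hj))]
  rw [sum_congr rfl hcol, sum_eq_single k]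
  · simp
  · intro j hj hne
    rw [if_neg hne, zero_smul]
  · intro h; exact absurd (self_mem_range_succ k) h


section Prof

variable (e n N : ℕ)

/-- The profile of a finite set: for each color and each size `< n`, the number of
subsets of that size and color, modulo `e`. -/
def interpProf {α : Type} [DecidableEq α] (t : Finset α → Fin N) (X : Finset α) :
    Fin N × Fin n → ZMod e :=
  fun p => (((X.powerset.filter fun S => S.card = (p.2 : ℕ) ∧ t S = p.1).card : ℕ) : ZMod e)

theorem interp_alt_sum_v {α : Type} [DecidableEq α] (t : Finset α → Fin N)
    (X H : Finset α) (hHX : H ⊆ X) (hn : n ≤ H.card) :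
    ∑ D ∈ H.powerset, (-1 : ℤ) ^ D.card • interpProf e n N t (X \ D) = 0 := by
  funext p
  rw [Finset.sum_apply]
  have hsz : ∀ S : Finset α, (S.card = (p.2 : ℕ) ∧ t S = p.1) → S.card < H.card := by
    intro S hS
    have := p.2.isLt
    omega
  have hint := interp_alt_sum X H hHX (fun S => S.card = (p.2 : ℕ) ∧ t S = p.1) hsz
  have hterm : ∀ D ∈ H.powerset,
      ((-1 : ℤ) ^ D.card • interpProf e n N t (X \ D)) p
      = ((((-1 : ℤ) ^ D.card *
          ((X \ D).powerset.filter fun S => S.card = (p.2 : ℕ) ∧ t S = p.1).card : ℤ)) : ZMod e) := by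
    intro D _
    rw [Pi.smul_apply]
    rw [interpProf]
    rw [zsmul_eq_mul]
    push_cast
    ring
  rw [sum_congr rfl hterm, ← Int.cast_sum, hint]
  simp

theorem interp_dvd_choose (i : ℕ) (he : 0 < e) (h1 : 1 ≤ i) (h2 : i < n) :
    e ∣ (e * n.factorial).choose i := by
  set P := e * n.factorial with hP
  have hP1 : 1 ≤ P := Nat.one_le_iff_ne_zero.mpr (by
    have := Nat.factorial_pos n
    positivity)
  obtain ⟨w, hw⟩ := Nat.dvd_factorial h1 (by omega : i ≤ n)
  have key : P * ((P - 1).choose (i - 1)) = P.choose i * i := by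
    have hs := Nat.add_one_mul_choose_eq (P - 1) (i - 1)
    have e1 : P - 1 + 1 = P := by omega
    have e2 : i - 1 + 1 = i := by omega
    rw [e1, e2] at hs
    exact hs
  have hcalc : P.choose i * i = (e * (w * (P - 1).choose (i - 1))) * i := by
    rw [← key, hP, hw]; ring
  exact ⟨_, Nat.eq_of_mul_eq_mul_right (by omega : 0 < i) hcalc⟩

theorem interp_onestep (he : 0 < e) (hn : 0 < n) :
    ∃ R : ℕ, ∀ {α : Type} [DecidableEq α] (X : Finset α) (t : Finset α → Fin N),
      R ≤ X.card → ∃ X', X' ⊆ X ∧ X'.card < X.card ∧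
        interpProf e n N t X' = interpProf e n N t X := by
  haveI : NeZero e := ⟨he.ne'⟩
  set P := e * n.factorial with hP
  have hPn : n ≤ P := by
    calc n ≤ n.factorial := Nat.self_le_factorial n
      _ = 1 * n.factorial := (one_mul _).symm
      _ ≤ e * n.factorial := Nat.mul_le_mul_right _ he
  have hP1 : 0 < P := Nat.mul_pos he (Nat.factorial_pos n)
  obtain ⟨R, hR⟩ := interp_ramsey_all P (Fintype.card (Fin N × Fin n → ZMod e)) P
  refine ⟨max R P, ?_⟩
  intro α _ X t hX
  letI : LinearOrder α := by classical exact linearOrderOfSTO WellOrderingRel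
  set f : Finset α → Fin (Fintype.card (Fin N × Fin n → ZMod e)) :=
    fun D => (Fintype.equivFin _) (interpProf e n N t (X \ D)) with hf
  obtain ⟨H₁, hH₁X, hH₁card, hhom⟩ := hR X f (le_trans (le_max_left _ _) hX)
  obtain ⟨H, hHsub, hHcard⟩ := H₁.exists_subset_card_eq hH₁card
  have hHX : H ⊆ X := hHsub.trans hH₁X
  have hom' : ∀ D D' : Finset α, D ⊆ H → D' ⊆ H → D.card = D'.card →
      interpProf e n N t (X \ D) = interpProf e n N t (X \ D') := by
    intro D D' h1 h2 h3
    have hcd : D.card ≤ P := by rw [← hHcard]; exact card_le_card h1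
    have hcol := hhom D.card hcd D (h1.trans hHsub) rfl D' (h2.trans hHsub) h3.symm
    exact (Fintype.equivFin _).injective hcol
  have hchoose : ∀ j, j ≤ P → ∃ D, D ⊆ H ∧ D.card = j := by
    intro j hj
    obtain ⟨D, h1, h2⟩ := H.exists_subset_card_eq (n := j) (by rw [hHcard]; exact hj)
    exact ⟨D, h1, h2⟩
  classical
  set choiceD : ℕ → Finset α := fun j => if hj : j ≤ P then (hchoose j hj).choose else ∅
    with hchoiceD
  set cc : ℕ → (Fin N × Fin n → ZMod e) := fun j => interpProf e n N t (X \ choiceD j) with hcc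
  have hchoiceD_spec : ∀ j (hj : j ≤ P), choiceD j ⊆ H ∧ (choiceD j).card = j := by
    intro j hj
    rw [hchoiceD]
    simp only [dif_pos hj]
    exact (hchoose j hj).choose_spec
  have hccval : ∀ D : Finset α, D ⊆ H → interpProf e n N t (X \ D) = cc D.card := by
    intro D hD
    have hj : D.card ≤ P := by rw [← hHcard]; exact card_le_card hD
    obtain ⟨hs1, hs2⟩ := hchoiceD_spec D.card hj
    exact hom' D _ hD hs1 hs2.symm
  have hγ : ∀ i, n ≤ i → i ≤ P →
      ∑ j ∈ range (i + 1), ((-1 : ℤ) ^ (i - j) * (i.choose j)) • cc j = 0 := by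
    intro i hni hiP
    obtain ⟨Di, hDisub, hDicard⟩ := hchoose i hiP
    have hid := interp_alt_sum_v e n N t X Di (hDisub.trans hHX)
      (by rw [hDicard]; exact hni)
    have hterm : ∀ D ∈ Di.powerset, ((-1 : ℤ) ^ D.card • interpProf e n N t (X \ D))
        = (fun m => (-1 : ℤ) ^ m • cc m) D.card := by
      intro D hD
      simp only
      rw [hccval D ((mem_powerset.mp hD).trans hDisub)]
    rw [sum_congr rfl hterm] at hid
    rw [sum_powerset_apply_card (fun m => (-1 : ℤ) ^ m • cc m)] at hid
    rw [hDicard] at hid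
    have hconv : ∑ j ∈ range (i + 1), ((-1 : ℤ) ^ (i - j) * (i.choose j)) • cc j
        = (-1 : ℤ) ^ i • ∑ m ∈ range (i + 1), i.choose m • ((-1 : ℤ) ^ m • cc m) := by
      rw [smul_sum]
      refine sum_congr rfl fun j hj => ?_
      have hji : j ≤ i := Nat.lt_succ_iff.mp (mem_range.mp hj)
      have hcoef : (-1 : ℤ) ^ (i - j) * (i.choose j)
          = (-1 : ℤ) ^ i * ((i.choose j : ℤ) * (-1) ^ j) := by
        have hjj : (-1 : ℤ) ^ (j + j) = 1 := by
          rw [← two_mul, pow_mul]; norm_num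
        have key : (-1 : ℤ) ^ (i - j) = (-1) ^ i * (-1) ^ j := by
          have h4 : i - j + (j + j) = i + j := by omega
          calc (-1 : ℤ) ^ (i - j) = (-1) ^ (i - j) * ((-1) ^ (j + j)) := by rw [hjj, mul_one]
            _ = (-1) ^ (i - j + (j + j)) := (pow_add (-1 : ℤ) (i - j) (j + j)).symm
            _ = (-1) ^ (i + j) := by rw [h4]
            _ = (-1) ^ i * (-1) ^ j := pow_add (-1 : ℤ) i j
        rw [key]; ring
      calc ((-1 : ℤ) ^ (i - j) * (i.choose j)) • cc j
          = ((-1 : ℤ) ^ i * ((i.choose j : ℤ) * (-1) ^ j)) • cc j := by rw [hcoef]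
        _ = (-1 : ℤ) ^ i • (((i.choose j : ℤ)) • ((-1 : ℤ) ^ j • cc j)) := by
            rw [mul_smul, mul_smul]
        _ = (-1 : ℤ) ^ i • ((i.choose j) • ((-1 : ℤ) ^ j • cc j)) := by rw [natCast_zsmul]
    rw [hconv, hid, smul_zero]
  have hkill : ∀ g : Fin N × Fin n → ZMod e, (e : ℤ) • g = 0 := by
    intro g
    funext p
    rw [Pi.smul_apply, zsmul_eq_mul, Int.cast_natCast, ZMod.natCast_self, zero_mul]
    rfl
  have hmid : ∀ i, 1 ≤ i → i < n →
      (P.choose i : ℤ) • (∑ j ∈ range (i + 1), ((-1 : ℤ) ^ (i - j) * (i.choose j)) • cc j)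
        = 0 := by
    intro i h1 h2
    obtain ⟨w, hw⟩ := interp_dvd_choose e n i he h1 h2
    rw [hw]
    push_cast
    rw [mul_smul, hkill]
  have hc0 : cc P = cc 0 := by
    have hfinal := interp_binom_inv cc P
    rw [sum_eq_single 0] at hfinal
    · rw [range_one, sum_singleton, Nat.choose_zero_right, Nat.cast_one, one_smul] at hfinal
      have h1 : ((-1 : ℤ) ^ (0 - 0) * ((Nat.choose 0 0 : ℕ) : ℤ)) • cc 0 = cc 0 := by
        norm_num
      rw [h1] at hfinal
      exact hfinal.symm
    · intro i hi hne
      have hiP : i ≤ P := Nat.lt_succ_iff.mp (mem_range.mp hi)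
      rcases lt_or_ge i n with hlt | hge
      · exact hmid i (Nat.one_le_iff_ne_zero.mpr hne) hlt
      · rw [hγ i hge hiP, smul_zero]
    · intro h
      exact absurd (mem_range.mpr (Nat.succ_pos P)) h
  have h0 : cc 0 = interpProf e n N t X := by
    obtain ⟨hs1, hs2⟩ := hchoiceD_spec 0 (Nat.zero_le P)
    rw [card_eq_zero] at hs2
    rw [hcc]
    simp only
    rw [hs2, sdiff_empty]
  obtain ⟨hPsub, hPcard⟩ := hchoiceD_spec P le_rfl
  refine ⟨X \ choiceD P, sdiff_subset, ?_, ?_⟩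
  · rw [card_sdiff_of_subset (hPsub.trans hHX), hPcard]
    have hPX : P ≤ X.card := le_trans (le_max_right R P) hX
    omega
  · have : interpProf e n N t (X \ choiceD P) = cc P := by rw [hcc]
    rw [this, hc0, h0]

end Prof

/-- Combinatorial interpolation, full version: for all positive `e`, `n`, `N`
there is a positive `d` such that for every finite set `X` and every coloring
`t` of the (nonempty, of size `≤ n-1`) subsets of `X` by `N` colors, there is
`T ⊆ X` with `|T| ≤ d` such that for every color `a` and every `1 ≤ s ≤ n-1`
the number of size-`s` subsets of `X` with color `a` is congruent mod `e` to
the number of size-`s` subsets of `T` with color `a`. -/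
theorem interpolation_full (e n N : ℕ) (he : 0 < e) (hn : 0 < n) (hN : 0 < N) :
    ∃ d : ℕ, 0 < d ∧
      ∀ (α : Type) [DecidableEq α] (X : Finset α),
        ∀ t : Finset α → Fin N,
          ∃ T : Finset α, T ⊆ X ∧ T.card ≤ d ∧
            ∀ (a : Fin N) (s : ℕ), 1 ≤ s → s ≤ n - 1 →
              (X.powerset.filter fun S => S.card = s ∧ t S = a).card ≡
                (T.powerset.filter fun S => S.card = s ∧ t S = a).card [MOD e] := by
  obtain ⟨R, hstep⟩ := interp_onestep e n N he hn
  refine ⟨max R 1, lt_of_lt_of_le Nat.one_pos (le_max_right _ _), ?_⟩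
  intro α _ X t
  have main : ∀ (k : ℕ) (Y : Finset α), Y.card ≤ k → ∃ T, T ⊆ Y ∧ T.card ≤ max R 1 ∧
      interpProf e n N t T = interpProf e n N t Y := by
    intro k
    induction k with
    | zero =>
      intro Y hY
      exact ⟨Y, Subset.rfl, by omega, rfl⟩
    | succ k IHk =>
      intro Y hY
      by_cases hle : Y.card ≤ max R 1
      · exact ⟨Y, Subset.rfl, hle, rfl⟩
      · obtain ⟨Y', hsub, hlt, heq⟩ := hstep Y t (by omega : R ≤ Y.card)
        obtain ⟨T, h1, h2, h3⟩ := IHk Y' (by omega)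
        exact ⟨T, h1.trans hsub, h2, h3.trans heq⟩
  obtain ⟨T, hTsub, hTcard, hTv⟩ := main X.card X le_rfl
  refine ⟨T, hTsub, hTcard, ?_⟩
  intro a s hs1 hs2
  have hsn : s < n := by omega
  have hcomp := congrFun hTv (a, ⟨s, hsn⟩)
  simp only [interpProf] at hcomp
  exact ((ZMod.natCast_eq_natCast_iff _ _ _).mp hcomp).symm
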